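/- Under the separable covariance structure Cov(\varepsilon) = \Sigma_N \otimes \Sigma_T and independence of epoch-(T+1) errors with covariance (\Sigma_T)_{1,1} \Sigma_N, the pooled prediction error satisfies E_i^{pool} = (x_{i,T+1}' (\sum_j X_j'X_j)^{-1} \sum_j X_j'X_j (\beta_j - \beta_i))^2 + Tr[(\sum_j X_j'X_j)^{-1} x_{i,T+1} x_{i,T+1}' (\sum_j X_j'X_j)^{-1} \sum_{j,k} (\Sigma_N)_{j,k} X_j' \Sigma_T X_k] + (\Sigma_N)_{i,i} (\Sigma_T)_{1,1}. -/

import Mathlib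

open scoped BigOperators
open Matrix MeasureTheory ProbabilityTheory

lemma my_sum_mulVec {n m ι : Type*} [Fintype n] (s : Finset ι)
    (M : ι → Matrix m n ℝ) (v : n → ℝ) :
    (∑ j ∈ s, M j) *ᵥ v = ∑ j ∈ s, (M j *ᵥ v) := by
  ext t
  simp only [Matrix.mulVec, dotProduct, Finset.sum_apply, Matrix.sum_apply,
    Finset.sum_mul]
  rw [Finset.sum_comm]

lemma my_dotProduct_sum {n ι : Type*} [Fintype n] (s : Finset ι)
    (v : n → ℝ) (f : ι → n → ℝ) :
    v ⬝ᵥ (∑ j ∈ s, f j) = ∑ j ∈ s, v ⬝ᵥ f j := by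
  simp only [dotProduct, Finset.sum_apply, Finset.mul_sum]
  rw [Finset.sum_comm]

lemma my_trace_vmv {n : Type*} [Fintype n] (u v : n → ℝ) (M : Matrix n n ℝ) :
    (Matrix.vecMulVec u v * M).trace = v ⬝ᵥ (M *ᵥ u) := by
  simp only [Matrix.trace, Matrix.diag, Matrix.mul_apply, Matrix.vecMulVec_apply,
    dotProduct, Matrix.mulVec, Finset.mul_sum]
  rw [Finset.sum_comm]
  exact Finset.sum_congr rfl fun t _ => Finset.sum_congr rfl fun s _ => by ring

lemma my_trace_form {N T K : ℕ} (X : Fin N → Matrix (Fin T) (Fin K) ℝ)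
    (xi : Fin K → ℝ) (SigmaN : Matrix (Fin N) (Fin N) ℝ)
    (SigmaT : Matrix (Fin T) (Fin T) ℝ)
    (A : Matrix (Fin K) (Fin K) ℝ) (hA : Aᵀ = A) :
    (A * Matrix.vecMulVec xi xi * A
        * ∑ j, ∑ k, SigmaN j k • ((X j)ᵀ * SigmaT * X k)).trace
      = ∑ p : Fin N × Fin T, ∑ q : Fin N × Fin T,
          (X p.1 *ᵥ (xi ᵥ* A)) p.2 * (X q.1 *ᵥ (xi ᵥ* A)) q.2
            * (SigmaN p.1 q.1 * SigmaT p.2 q.2) := by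
  set M : Matrix (Fin K) (Fin K) ℝ := ∑ j, ∑ k, SigmaN j k • ((X j)ᵀ * SigmaT * X k) with hM
  set w : Fin K → ℝ := xi ᵥ* A with hw
  have step1 : (A * Matrix.vecMulVec xi xi * A * M).trace
      = (Matrix.vecMulVec xi xi * (A * M * A)).trace := by
    rw [Matrix.trace_mul_cycle (A * Matrix.vecMulVec xi xi) A M,
      Matrix.trace_mul_cycle M (A * Matrix.vecMulVec xi xi) A,
      Matrix.trace_mul_comm (Matrix.vecMulVec xi xi) (A * M * A)]
    congr 1
    simp only [Matrix.mul_assoc]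
  rw [step1, my_trace_vmv]
  have hAx : A *ᵥ xi = w := by rw [hw, ← Matrix.mulVec_transpose, hA]
  have step2 : (A * M * A) *ᵥ xi = A *ᵥ (M *ᵥ w) := by
    rw [← Matrix.mulVec_mulVec, ← Matrix.mulVec_mulVec, hAx]
  rw [step2, Matrix.dotProduct_mulVec, ← hw]
  have step3 : M *ᵥ w = ∑ j, ∑ k, SigmaN j k • (((X j)ᵀ * SigmaT * X k) *ᵥ w) := by
    rw [hM, my_sum_mulVec]
    exact Finset.sum_congr rfl fun j _ => by
      rw [my_sum_mulVec]
      exact Finset.sum_congr rfl fun k _ => Matrix.smul_mulVec _ _ _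
  rw [step3, my_dotProduct_sum]
  have step4 : ∀ j k, w ⬝ᵥ (((X j)ᵀ * SigmaT * X k) *ᵥ w)
      = (X j *ᵥ w) ⬝ᵥ (SigmaT *ᵥ (X k *ᵥ w)) := by
    intro j k
    rw [← Matrix.mulVec_mulVec, ← Matrix.mulVec_mulVec, Matrix.dotProduct_mulVec,
      Matrix.vecMul_transpose]
  have step5 : ∀ j, w ⬝ᵥ ∑ k, SigmaN j k • (((X j)ᵀ * SigmaT * X k) *ᵥ w)
      = ∑ k, SigmaN j k * ((X j *ᵥ w) ⬝ᵥ (SigmaT *ᵥ (X k *ᵥ w))) := by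
    intro j
    rw [my_dotProduct_sum]
    exact Finset.sum_congr rfl fun k _ => by
      rw [dotProduct_smul, smul_eq_mul, step4]
  simp only [step5]
  -- now pure sum identity
  have key : ∀ (c : Fin N → Fin T → ℝ),
      ∑ j, ∑ k, SigmaN j k * (c j ⬝ᵥ (SigmaT *ᵥ c k))
        = ∑ p : Fin N × Fin T, ∑ q : Fin N × Fin T,
            c p.1 p.2 * c q.1 q.2 * (SigmaN p.1 q.1 * SigmaT p.2 q.2) := by
    intro c
    simp only [Fintype.sum_prod_type, dotProduct, Matrix.mulVec, Finset.mul_sum]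
    refine Finset.sum_congr rfl fun j _ => ?_
    rw [Finset.sum_comm]
    exact Finset.sum_congr rfl fun s _ => Finset.sum_congr rfl fun k _ =>
      Finset.sum_congr rfl fun t _ => by ring
  exact key fun j => X j *ᵥ w

/-- Closed form of the pooled prediction error (Lemma 1, second part).
Under the separable covariance structure `Cov(ε) = Σ_N ⊗ Σ_T` and independent
period-`T+1` errors with covariance `(Σ_T)₁₁ Σ_N`, the pooled prediction error is
`E_i^pool = (x_{i,T+1}' (∑ⱼXⱼ'Xⱼ)⁻¹ ∑ⱼ Xⱼ'Xⱼ(βⱼ-βᵢ))²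
  + Tr[(∑ⱼXⱼ'Xⱼ)⁻¹ x_{i,T+1}x_{i,T+1}' (∑ⱼXⱼ'Xⱼ)⁻¹ ∑_{j,k}(Σ_N)_{jk} Xⱼ'Σ_T Xₖ]
  + (Σ_N)ᵢᵢ (Σ_T)₁₁`,
where `β̂ᵖᵒᵒˡ = (∑ⱼXⱼ'Xⱼ)⁻¹ ∑ⱼ Xⱼ'yⱼ`, `yⱼ = Xⱼβⱼ + εⱼ`,
`y_{i,T+1} = x_{i,T+1}'βᵢ + ε_{i,T+1}` (regressors fixed). -/
theorem stmt_9 {N T K : ℕ} (hT : 0 < T) {Ω : Type*} [MeasurableSpace Ω]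
    (μ : Measure Ω) [IsProbabilityMeasure μ]
    (X : Fin N → Matrix (Fin T) (Fin K) ℝ)
    (β : Fin N → Fin K → ℝ) (x : Fin N → Fin K → ℝ)
    (SigmaN : Matrix (Fin N) (Fin N) ℝ) (SigmaT : Matrix (Fin T) (Fin T) ℝ)
    (ε : Ω → Fin N → Fin T → ℝ) (εnext : Ω → Fin N → ℝ)
    (hmeas : Measurable ε) (hmeasnext : Measurable εnext)
    (hmean : ∀ i s, ∫ ω, ε ω i s ∂μ = 0)
    (hInt : ∀ i j s t, Integrable (fun ω => ε ω i s * ε ω j t) μ)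
    (hcov : ∀ i j s t, ∫ ω, ε ω i s * ε ω j t ∂μ = SigmaN i j * SigmaT s t)
    (hmeannext : ∀ i, ∫ ω, εnext ω i ∂μ = 0)
    (hIntnext : ∀ i j, Integrable (fun ω => εnext ω i * εnext ω j) μ)
    (hcovnext : ∀ i j, ∫ ω, εnext ω i * εnext ω j ∂μ
        = SigmaT ⟨0, hT⟩ ⟨0, hT⟩ * SigmaN i j)
    (hindep : IndepFun εnext ε μ)
    (hS : IsUnit (∑ j, (X j)ᵀ * X j).det)
    (i : Fin N) :
    ∫ ω, (x i ⬝ᵥ ((∑ j, (X j)ᵀ * X j)⁻¹ *ᵥ ∑ j, (X j)ᵀ *ᵥ (X j *ᵥ β j + ε ω j))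
            - (x i ⬝ᵥ β i + εnext ω i)) ^ 2 ∂μ
      = (x i ⬝ᵥ ((∑ j, (X j)ᵀ * X j)⁻¹ *ᵥ ∑ j, ((X j)ᵀ * X j) *ᵥ (β j - β i))) ^ 2
        + ((∑ j, (X j)ᵀ * X j)⁻¹ * Matrix.vecMulVec (x i) (x i)
            * (∑ j, (X j)ᵀ * X j)⁻¹
            * ∑ j, ∑ k, SigmaN j k • ((X j)ᵀ * SigmaT * X k)).trace
        + SigmaN i i * SigmaT ⟨0, hT⟩ ⟨0, hT⟩ := by
  classical
  set S : Matrix (Fin K) (Fin K) ℝ := ∑ j, (X j)ᵀ * X j with hSdef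
  set A : Matrix (Fin K) (Fin K) ℝ := S⁻¹ with hAdef
  have hAS : A * S = 1 := Matrix.nonsing_inv_mul S hS
  have hST : Sᵀ = S := by
    rw [hSdef]
    simp [Matrix.transpose_sum, Matrix.transpose_mul, Matrix.transpose_transpose]
  have hAT : Aᵀ = A := by rw [hAdef, Matrix.transpose_nonsing_inv, hST]
  set w : Fin K → ℝ := x i ᵥ* A with hw
  set c : Fin N × Fin T → ℝ := fun p => (X p.1 *ᵥ w) p.2 with hc
  set b : ℝ := x i ⬝ᵥ (A *ᵥ ∑ j, ((X j)ᵀ * X j) *ᵥ (β j - β i)) with hb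
  set L : Ω → ℝ := fun ω => ∑ p : Fin N × Fin T, c p * ε ω p.1 p.2 with hL
  set e : Ω → ℝ := fun ω => εnext ω i with he
  -- pointwise decomposition
  have hpt : ∀ ω, x i ⬝ᵥ (A *ᵥ ∑ j, (X j)ᵀ *ᵥ (X j *ᵥ β j + ε ω j))
      - (x i ⬝ᵥ β i + εnext ω i) = b + L ω - e ω := by
    intro ω
    have h1 : ∑ j, (X j)ᵀ *ᵥ (X j *ᵥ β j + ε ω j)
        = (∑ j, ((X j)ᵀ * X j) *ᵥ β j) + ∑ j, (X j)ᵀ *ᵥ ε ω j := by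
      rw [← Finset.sum_add_distrib]
      exact Finset.sum_congr rfl fun j _ => by
        rw [Matrix.mulVec_add, Matrix.mulVec_mulVec]
    have hbeq : x i ⬝ᵥ (A *ᵥ ∑ j, ((X j)ᵀ * X j) *ᵥ β j) - x i ⬝ᵥ β i = b := by
      have h2 : ∑ j, ((X j)ᵀ * X j) *ᵥ (β j - β i)
          = (∑ j, ((X j)ᵀ * X j) *ᵥ β j) - S *ᵥ β i := by
        rw [hSdef, my_sum_mulVec, ← Finset.sum_sub_distrib]
        exact Finset.sum_congr rfl fun j _ => by rw [Matrix.mulVec_sub]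
      rw [hb, h2, Matrix.mulVec_sub, dotProduct_sub, Matrix.mulVec_mulVec,
        hAS, Matrix.one_mulVec]
    have hLeq : x i ⬝ᵥ (A *ᵥ ∑ j, (X j)ᵀ *ᵥ ε ω j) = L ω := by
      rw [Matrix.dotProduct_mulVec, ← hw, my_dotProduct_sum, hL]
      simp only [Fintype.sum_prod_type]
      refine Finset.sum_congr rfl fun j _ => ?_
      rw [Matrix.dotProduct_mulVec, Matrix.vecMul_transpose]
      simp [dotProduct, hc]
    rw [h1, Matrix.mulVec_add, dotProduct_add, hLeq, he, ← hbeq]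
    ring
  -- measurability and integrability
  have hmε : ∀ j s, Measurable fun ω => ε ω j s := fun j s =>
    (measurable_pi_apply s).comp ((measurable_pi_apply j).comp hmeas)
  have hme : Measurable e := (measurable_pi_apply i).comp hmeasnext
  have hIntε : ∀ j s, Integrable (fun ω => ε ω j s) μ := fun j s =>
    ((memLp_two_iff_integrable_sq (hmε j s).aestronglyMeasurable).2
      (by simpa [sq] using hInt j j s s)).integrable one_le_two
  have hInte : Integrable e μ :=
    ((memLp_two_iff_integrable_sq hme.aestronglyMeasurable).2
      (by simpa [sq] using hIntnext i i)).integrable one_le_two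
  have hindep' : ∀ j s, IndepFun e (fun ω => ε ω j s) μ := fun j s =>
    hindep.comp (measurable_pi_apply i)
      ((measurable_pi_apply s).comp (measurable_pi_apply j))
  have hIntεe : ∀ j s, Integrable (fun ω => ε ω j s * e ω) μ := by
    intro j s
    have := (hindep' j s).integrable_mul hInte (hIntε j s)
    have heq : (fun ω => ε ω j s * e ω) = (e * fun ω => ε ω j s) :=
      funext fun ω => mul_comm _ _
    rw [heq]; exact this
  have hεe0 : ∀ j s, ∫ ω, ε ω j s * e ω ∂μ = 0 := by
    intro j s
    have h := (hindep' j s).integral_mul_eq_mul_integral hme.aestronglyMeasurable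
      (hmε j s).aestronglyMeasurable
    have heq : (fun ω => ε ω j s * e ω) = (e * fun ω => ε ω j s) :=
      funext fun ω => mul_comm _ _
    calc ∫ ω, ε ω j s * e ω ∂μ = integral μ (e * fun ω => ε ω j s) := by rw [heq]
      _ = (∫ ω, e ω ∂μ) * ∫ ω, ε ω j s ∂μ := h
      _ = 0 := by rw [he]; simp only []; rw [hmeannext i, zero_mul]
  have hIntL : Integrable L μ :=
    integrable_finset_sum _ fun p _ => (hIntε p.1 p.2).const_mul (c p)
  have hL2eq : (fun ω => L ω ^ 2)
      = fun ω => ∑ p : Fin N × Fin T, ∑ q : Fin N × Fin T,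
          c p * c q * (ε ω p.1 p.2 * ε ω q.1 q.2) := by
    funext ω
    rw [sq, hL]
    rw [Finset.sum_mul_sum]
    exact Finset.sum_congr rfl fun p _ => Finset.sum_congr rfl fun q _ => by ring
  have hIntL2 : Integrable (fun ω => L ω ^ 2) μ := by
    rw [hL2eq]
    exact integrable_finset_sum _ fun p _ => integrable_finset_sum _ fun q _ =>
      (hInt p.1 q.1 p.2 q.2).const_mul _
  have hLeeq : (fun ω => L ω * e ω)
      = fun ω => ∑ p : Fin N × Fin T, c p * (ε ω p.1 p.2 * e ω) := by
    funext ω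
    rw [hL, Finset.sum_mul]
    exact Finset.sum_congr rfl fun p _ => by ring
  have hIntLe : Integrable (fun ω => L ω * e ω) μ := by
    rw [hLeeq]
    exact integrable_finset_sum _ fun p _ => (hIntεe p.1 p.2).const_mul _
  have hInte2 : Integrable (fun ω => e ω ^ 2) μ := by
    simpa [sq] using hIntnext i i
  -- integrals of the pieces
  have hEL : ∫ ω, L ω ∂μ = 0 := by
    rw [hL, integral_finset_sum _ fun p _ => (hIntε p.1 p.2).const_mul (c p)]
    simp [integral_const_mul, hmean]
  have hEe : ∫ ω, e ω ∂μ = 0 := hmeannext i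
  have hEe2 : ∫ ω, e ω ^ 2 ∂μ = SigmaT ⟨0, hT⟩ ⟨0, hT⟩ * SigmaN i i := by
    simpa [sq] using hcovnext i i
  have hELe : ∫ ω, L ω * e ω ∂μ = 0 := by
    rw [hLeeq, integral_finset_sum _ fun p _ => (hIntεe p.1 p.2).const_mul _]
    simp [integral_const_mul, hεe0]
  have hEL2 : ∫ ω, L ω ^ 2 ∂μ
      = ∑ p : Fin N × Fin T, ∑ q : Fin N × Fin T,
          c p * c q * (SigmaN p.1 q.1 * SigmaT p.2 q.2) := by
    rw [hL2eq, integral_finset_sum _ fun p _ => integrable_finset_sum _ fun q _ =>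
      (hInt p.1 q.1 p.2 q.2).const_mul _]
    refine Finset.sum_congr rfl fun p _ => ?_
    rw [integral_finset_sum _ fun q _ => (hInt p.1 q.1 p.2 q.2).const_mul _]
    exact Finset.sum_congr rfl fun q _ => by
      rw [integral_const_mul, hcov]
  -- main computation
  have hexpand : ∀ ω, (b + L ω - e ω) ^ 2
      = b ^ 2 + L ω ^ 2 + e ω ^ 2 + 2 * b * L ω - 2 * b * e ω
          - 2 * (L ω * e ω) := fun ω => by ring
  have hint_rw : (fun ω => (x i ⬝ᵥ (A *ᵥ ∑ j, (X j)ᵀ *ᵥ (X j *ᵥ β j + ε ω j))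
      - (x i ⬝ᵥ β i + εnext ω i)) ^ 2)
      = fun ω => b ^ 2 + L ω ^ 2 + e ω ^ 2 + 2 * b * L ω - 2 * b * e ω
          - 2 * (L ω * e ω) := by
    funext ω; rw [hpt ω, hexpand ω]
  rw [hint_rw]
  have I1 : Integrable (fun ω => b ^ 2 + L ω ^ 2) μ := (integrable_const _).add hIntL2
  have I2 : Integrable (fun ω => b ^ 2 + L ω ^ 2 + e ω ^ 2) μ := I1.add hInte2
  have I3 : Integrable (fun ω => b ^ 2 + L ω ^ 2 + e ω ^ 2 + 2 * b * L ω) μ :=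
    I2.add (hIntL.const_mul _)
  have I4 : Integrable (fun ω => b ^ 2 + L ω ^ 2 + e ω ^ 2 + 2 * b * L ω
      - 2 * b * e ω) μ := I3.sub (hInte.const_mul _)
  rw [integral_sub I4 (hIntLe.const_mul _), integral_sub I3 (hInte.const_mul _),
    integral_add I2 (hIntL.const_mul _), integral_add I1 hInte2,
    integral_add (integrable_const _) hIntL2,
    integral_const_mul, integral_const_mul, integral_const_mul,
    hEL, hEe, hELe, hEe2, hEL2, integral_const]
  simp only [probReal_univ, measure_univ, ENNReal.toReal_one, one_smul, mul_zero, add_zero, sub_zero]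
  have htr := my_trace_form X (x i) SigmaN SigmaT A hAT
  rw [← hw] at htr
  rw [htr.symm] -- ?
  ring
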